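/- arXiv:1911.04933 — 2 statements merged into one kernel-verified Lean document; each statement's English description precedes it below -/
import Mathlib

section
/- Let A, B be symmetric positive definite d×d real matrices, w₀, w*_A, w*_B ∈ ℝᵈ, and define w_A(t) = w*_A + exp(−tA)(w₀ − w*_A), d_A(t) = w_A(t) − w*_A, d_B(t) = w_A(t) − w*_B, and the scrubbed point h_t(w_A(t)) = w_A(t) + exp(−tB) exp(tA) d_A(t) + exp(−tB)(d_B(t) − d_A(t)) − d_B(t). Then as t → ∞ the scrubbing map converges to the Newton update S_∞(w) = w − B⁻¹∇L_{𝒟_r}(w) where ∇L_{𝒟_r}(w) = B(w − w*_B): that is, ‖h_t(w_A(t)) − (w_A(t) − B⁻¹ B (w_A(t) − w*_B))‖ → 0 as t → ∞. (Paper's Proposition 3, limiting case: after the optimization has converged, the optimal scrubbing reduces to the Newton update.) -/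
open Matrix NormedSpace Filter
open scoped Topology

lemma exp_neg_smul_tendsto {d : ℕ} {B : Matrix (Fin d) (Fin d) ℝ} (hB : B.PosDef) :
    Tendsto (fun t : ℝ => NormedSpace.exp (-(t • B))) atTop (𝓝 0) := by
  have hH : B.IsHermitian := hB.1
  have hstar : star (hH.eigenvectorUnitary : Matrix (Fin d) (Fin d) ℝ)
      * (hH.eigenvectorUnitary : Matrix (Fin d) (Fin d) ℝ) = 1 := by
    simpa using congrArg Subtype.val (unitary.star_mul_self hH.eigenvectorUnitary)
  have hVinv : (hH.eigenvectorUnitary : Matrix (Fin d) (Fin d) ℝ)⁻¹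
      = star (hH.eigenvectorUnitary : Matrix (Fin d) (Fin d) ℝ) :=
    Matrix.inv_eq_left_inv hstar
  have hdet : (star (hH.eigenvectorUnitary : Matrix (Fin d) (Fin d) ℝ)).det
      * (hH.eigenvectorUnitary : Matrix (Fin d) (Fin d) ℝ).det = 1 := by
    rw [← Matrix.det_mul, hstar, Matrix.det_one]
  have hVunit : IsUnit (hH.eigenvectorUnitary : Matrix (Fin d) (Fin d) ℝ) :=
    (Matrix.isUnit_iff_isUnit_det _).mpr
      (IsUnit.of_mul_eq_one _ (by rw [mul_comm]; exact hdet))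
  have key : ∀ t : ℝ, NormedSpace.exp (-(t • B)) =
      (hH.eigenvectorUnitary : Matrix (Fin d) (Fin d) ℝ)
        * diagonal (fun i => Real.exp (-(t * hH.eigenvalues i)))
        * star (hH.eigenvectorUnitary : Matrix (Fin d) (Fin d) ℝ) := by
    intro t
    have h1 : -(t • B) = (hH.eigenvectorUnitary : Matrix (Fin d) (Fin d) ℝ)
        * diagonal (fun i => -(t * hH.eigenvalues i))
        * (hH.eigenvectorUnitary : Matrix (Fin d) (Fin d) ℝ)⁻¹ := by
      rw [hVinv]
      conv_lhs => rw [hH.spectral_theorem]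
      rw [show (diagonal (fun i => -(t * hH.eigenvalues i)) : Matrix (Fin d) (Fin d) ℝ)
          = -(t • diagonal (RCLike.ofReal ∘ hH.eigenvalues)) from by
        ext i j
        by_cases h : i = j <;> simp [Matrix.diagonal_apply, h]]
      simp [Matrix.mul_smul, Matrix.smul_mul, Matrix.mul_neg, Matrix.neg_mul]
    rw [h1, Matrix.exp_conj _ _ hVunit, Matrix.exp_diagonal, hVinv,
      show (NormedSpace.exp fun i => -(t * hH.eigenvalues i))
          = fun i => Real.exp (-(t * hH.eigenvalues i)) from
        funext fun i => by rw [Pi.coe_exp]; exact (congrFun Real.exp_eq_exp_ℝ _).symm]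
  have hmu : ∀ i, 0 < hH.eigenvalues i := fun i => hB.eigenvalues_pos i
  refine tendsto_pi_nhds.mpr ?_
  intro i
  rw [tendsto_pi_nhds]
  intro j
  have : ∀ t : ℝ, NormedSpace.exp (-(t • B)) i j =
      ∑ k, (hH.eigenvectorUnitary : Matrix (Fin d) (Fin d) ℝ) i k
        * Real.exp (-(t * hH.eigenvalues k))
        * star (hH.eigenvectorUnitary : Matrix (Fin d) (Fin d) ℝ) k j := by
    intro t
    rw [key t, Matrix.mul_apply]
    congr 1
    funext k
    rw [Matrix.mul_diagonal]
  simp only [this, Matrix.zero_apply]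
  have h0 : (0 : ℝ) = ∑ k : Fin d, 0 := by simp
  rw [h0]
  apply tendsto_finset_sum
  intro k _
  have hexp : Tendsto (fun t : ℝ => Real.exp (-(t * hH.eigenvalues k))) atTop (𝓝 0) := by
    apply Real.tendsto_exp_atBot.comp
    apply Filter.tendsto_neg_atBot_iff.mpr
    exact Tendsto.atTop_mul_const (hmu k) tendsto_id
  have := (hexp.const_mul ((hH.eigenvectorUnitary : Matrix (Fin d) (Fin d) ℝ) i k)).mul_const
    (star (hH.eigenvectorUnitary : Matrix (Fin d) (Fin d) ℝ) k j)
  simpa [mul_comm, mul_assoc, mul_left_comm] using this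

/-- **Paper's Proposition 3, limiting case**: as `t → ∞`, the optimal quadratic scrubbing
`h_t(w_A(t)) = w_A(t) + e^{−tB}e^{tA} d_A(t) + e^{−tB}(d_B(t) − d_A(t)) − d_B(t)` converges
to the Newton update `S_∞(w) = w − B⁻¹ ∇L_{𝒟_r}(w)`, where `∇L_{𝒟_r}(w) = B(w − w*_B)`:
`‖h_t(w_A(t)) − (w_A(t) − B⁻¹ B (w_A(t) − w*_B))‖ → 0`. -/
theorem scrubbing_tendsto_newton_update {d : ℕ}
    (A B : Matrix (Fin d) (Fin d) ℝ) (hA : A.PosDef) (hB : B.PosDef)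
    (w₀ wA wB : Fin d → ℝ)
    (wApath dA dB scrub : ℝ → (Fin d → ℝ))
    (hwA : ∀ t, wApath t = wA + (NormedSpace.exp (-(t • A))) *ᵥ (w₀ - wA))
    (hdA : ∀ t, dA t = wApath t - wA)
    (hdB : ∀ t, dB t = wApath t - wB)
    (hscrub : ∀ t, scrub t = wApath t + (NormedSpace.exp (-(t • B)) * NormedSpace.exp (t • A)) *ᵥ dA t
        + (NormedSpace.exp (-(t • B))) *ᵥ (dB t - dA t) - dB t) :
    Tendsto (fun t : ℝ => ‖scrub t - (wApath t - (B⁻¹ * B) *ᵥ (wApath t - wB))‖)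
      atTop (𝓝 0) := by
  have hinv : B⁻¹ * B = 1 :=
    Matrix.nonsing_inv_mul B (isUnit_iff_ne_zero.mpr (ne_of_gt hB.det_pos))
  have hkey : ∀ t : ℝ, scrub t - (wApath t - (B⁻¹ * B) *ᵥ (wApath t - wB))
      = NormedSpace.exp (-(t • B)) *ᵥ (w₀ - wB) := by
    intro t
    have hcomm : Commute (t • A) (-(t • A)) := (Commute.refl _).neg_right
    have hexp1 : NormedSpace.exp (t • A) * NormedSpace.exp (-(t • A)) = 1 := by
      rw [← Matrix.exp_add_of_commute (t • A) (-(t • A)) hcomm]; simp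
    have hdAeq : dA t = NormedSpace.exp (-(t • A)) *ᵥ (w₀ - wA) := by
      rw [hdA, hwA]; abel
    rw [hscrub, hinv, one_mulVec, hdB, hdAeq, hwA, mulVec_mulVec, Matrix.mul_assoc,
      hexp1, Matrix.mul_one]
    have h2 : wA + NormedSpace.exp (-(t • A)) *ᵥ (w₀ - wA) - wB - NormedSpace.exp (-(t • A)) *ᵥ (w₀ - wA)
        = wA - wB := by abel
    rw [h2, show (w₀ - wB : Fin d → ℝ) = (w₀ - wA) + (wA - wB) from by abel, mulVec_add]
    abel
  simp only [hkey]
  have h1 : Tendsto (fun t : ℝ => NormedSpace.exp (-(t • B)) *ᵥ (w₀ - wB)) atTop (𝓝 0) := by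
    have := (exp_neg_smul_tendsto hB)
    have hcont : Continuous (fun M : Matrix (Fin d) (Fin d) ℝ => M *ᵥ (w₀ - wB)) := by
      apply continuous_pi
      intro i
      simp only [Matrix.mulVec, dotProduct]
      exact continuous_finset_sum _ fun j _ =>
        ((continuous_id.matrix_elem i j).mul continuous_const)
    have := (hcont.tendsto 0).comp this
    simpa [Function.comp_def] using this
  simpa using h1.norm
end

section
/- Let B be a symmetric positive definite d×d real matrix and c > 0. For every symmetric positive definite d×d matrix Σ, tr(BΣ) + c · tr(Σ⁻¹) ≥ 2√c · tr(B^{1/2}), and equality holds for Σ₀ = √c · B^{−1/2}, i.e., Σ₀ minimizes Σ ↦ tr(BΣ) + c·tr(Σ⁻¹) over symmetric positive definite matrices. (Paper's Proposition 4, isotropic case: with c = λσ_h², the optimal noise covariance for the scrubbing procedure S(w) = h(w) + n, n ∼ N(0,Σ), minimizing the Forgetting Lagrangian is Σ = √(λσ_h²) B^{−1/2}.) -/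
open Matrix
section
open scoped ComplexOrder
noncomputable def Matrix.PosSemidef.sqrt {n : Type*} [Fintype n] [DecidableEq n] {𝕜 : Type*}
    [RCLike 𝕜] {A : Matrix n n 𝕜} (hA : A.PosSemidef) : Matrix n n 𝕜 :=
  hA.1.eigenvectorUnitary.1 * diagonal ((↑) ∘ (Real.sqrt ∘ hA.1.eigenvalues)) *
  (star hA.1.eigenvectorUnitary : Matrix n n 𝕜)
end

private lemma Matrix.PosSemidef.posSemidef_sqrt {d : ℕ} {M : Matrix (Fin d) (Fin d) ℝ}
    (hM : M.PosSemidef) : hM.sqrt.PosSemidef := by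
  unfold Matrix.PosSemidef.sqrt
  rw [star_eq_conjTranspose]
  refine PosSemidef.mul_mul_conjTranspose_same ?_ _
  rw [posSemidef_diagonal_iff]
  intro i
  simp [Real.sqrt_nonneg]

private lemma Matrix.PosSemidef.sqrt_mul_self {d : ℕ} {M : Matrix (Fin d) (Fin d) ℝ}
    (hM : M.PosSemidef) : hM.sqrt * hM.sqrt = M := by
  unfold Matrix.PosSemidef.sqrt
  have hU : (star hM.1.eigenvectorUnitary : Matrix (Fin d) (Fin d) ℝ) *
      hM.1.eigenvectorUnitary.1 = 1 := Unitary.coe_star_mul_self _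
  conv_rhs => rw [hM.1.spectral_theorem, Unitary.conjStarAlgAut_apply]
  simp only [Matrix.mul_assoc]
  rw [← Matrix.mul_assoc _ _ (diagonal _ * _), hU, Matrix.one_mul, ← Matrix.mul_assoc
    (diagonal _) (diagonal _), diagonal_mul_diagonal]
  congr 3
  funext i
  simp [Real.mul_self_sqrt (hM.eigenvalues_nonneg i)]

private lemma posDef_of_posSemidef_isUnit {d : ℕ} {M : Matrix (Fin d) (Fin d) ℝ}
    (hM : M.PosSemidef) (hu : IsUnit M) : M.PosDef := by
  exact hM.posDef_iff_isUnit.mpr hu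

private lemma posDef_sqrt {d : ℕ} {M : Matrix (Fin d) (Fin d) ℝ} (hM : M.PosDef) :
    (hM.posSemidef.sqrt).PosDef := by
  refine posDef_of_posSemidef_isUnit hM.posSemidef.posSemidef_sqrt ?_
  rw [Matrix.isUnit_iff_isUnit_det]
  have h2 : hM.posSemidef.sqrt * hM.posSemidef.sqrt = M := hM.posSemidef.sqrt_mul_self
  have : (hM.posSemidef.sqrt).det * (hM.posSemidef.sqrt).det = M.det := by
    rw [← Matrix.det_mul, h2]
  refine isUnit_iff_ne_zero.mpr fun h0 => ?_
  rw [h0, mul_zero] at this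
  exact hM.det_pos.ne' this.symm

private lemma trace_transpose_mul_self_nonneg {d : ℕ} (X : Matrix (Fin d) (Fin d) ℝ) :
    0 ≤ (Xᵀ * X).trace := by
  rw [Matrix.trace]
  refine Finset.sum_nonneg fun i _ => ?_
  rw [Matrix.diag_apply, Matrix.mul_apply]
  exact Finset.sum_nonneg fun j _ => by
    simpa [Matrix.transpose_apply] using mul_self_nonneg (X j i)

/-- **Paper's Proposition 4, isotropic case**: for a symmetric positive definite matrix `B`
and `c > 0`, every symmetric positive definite `Σ` satisfies
`tr(BΣ) + c·tr(Σ⁻¹) ≥ 2√c·tr(B^{1/2})`, with equality at `Σ₀ = √c·B^{−1/2}`; i.e. `Σ₀`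
minimizes `Σ ↦ tr(BΣ) + c·tr(Σ⁻¹)` over symmetric positive definite matrices. -/
theorem optimal_isotropic_noise_covariance {d : ℕ}
    (B : Matrix (Fin d) (Fin d) ℝ) (hB : B.PosDef) (c : ℝ) (hc : 0 < c) :
    (∀ S : Matrix (Fin d) (Fin d) ℝ, S.PosDef →
      2 * Real.sqrt c * (hB.posSemidef.sqrt).trace ≤ (B * S).trace + c * S⁻¹.trace)
    ∧ (B * (Real.sqrt c • (hB.posSemidef.sqrt)⁻¹)).trace
        + c * (Real.sqrt c • (hB.posSemidef.sqrt)⁻¹)⁻¹.trace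
      = 2 * Real.sqrt c * (hB.posSemidef.sqrt).trace := by
  set A := hB.posSemidef.sqrt with hA
  have hApd : A.PosDef := posDef_sqrt hB
  have hAsym : Aᵀ = A := hApd.isHermitian
  have hAA : A * A = B := hB.posSemidef.sqrt_mul_self
  have hsc : 0 < Real.sqrt c := Real.sqrt_pos.mpr hc
  have hscsq : Real.sqrt c * Real.sqrt c = c := Real.mul_self_sqrt hc.le
  constructor
  · intro S hS
    set R := hS.posSemidef.sqrt with hR
    have hRpd : R.PosDef := posDef_sqrt hS
    have hRsym : Rᵀ = R := hRpd.isHermitian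
    have hRR : R * R = S := hS.posSemidef.sqrt_mul_self
    have hRu : IsUnit R.det := isUnit_iff_ne_zero.mpr hRpd.det_pos.ne'
    have hRinv : R * R⁻¹ = 1 := Matrix.mul_nonsing_inv R hRu
    have hRinv' : R⁻¹ * R = 1 := Matrix.nonsing_inv_mul R hRu
    have hRinvsym : (R⁻¹)ᵀ = R⁻¹ := by rw [Matrix.transpose_nonsing_inv, hRsym]
    have hSinv : R⁻¹ * R⁻¹ = S⁻¹ := by rw [← Matrix.mul_inv_rev, hRR]
    set X := R * A - Real.sqrt c • R⁻¹ with hX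
    have key : (Xᵀ * X).trace = (B * S).trace + c * S⁻¹.trace
        - 2 * Real.sqrt c * A.trace := by
      have hXT : Xᵀ = A * R - Real.sqrt c • R⁻¹ := by
        rw [hX, Matrix.transpose_sub, Matrix.transpose_mul, hAsym, hRsym,
          Matrix.transpose_smul, hRinvsym]
      rw [hXT, hX]
      have expand : (A * R - Real.sqrt c • R⁻¹) * (R * A - Real.sqrt c • R⁻¹)
          = A * S * A - Real.sqrt c • A - Real.sqrt c • A + c • S⁻¹ := by
        rw [Matrix.sub_mul, Matrix.mul_sub, Matrix.mul_sub]
        simp only [Matrix.mul_smul, Matrix.smul_mul, smul_smul]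
        have e1 : A * R * (R * A) = A * S * A := by
          rw [← Matrix.mul_assoc, Matrix.mul_assoc A R R, hRR]
        have e2 : A * R * R⁻¹ = A := by rw [Matrix.mul_assoc, hRinv, Matrix.mul_one]
        have e3 : R⁻¹ * (R * A) = A := by rw [← Matrix.mul_assoc, hRinv', Matrix.one_mul]
        rw [e1, e2, e3, hscsq, hSinv]
        abel
      rw [expand]
      have tASA : (A * S * A).trace = (B * S).trace := by
        rw [Matrix.trace_mul_comm, ← Matrix.mul_assoc, hAA]
      simp only [Matrix.trace_sub, Matrix.trace_add, Matrix.trace_smul, tASA,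
        smul_eq_mul]
      ring
    have h0 := trace_transpose_mul_self_nonneg X
    rw [key] at h0
    linarith
  · have hAu : IsUnit A.det := isUnit_iff_ne_zero.mpr hApd.det_pos.ne'
    have e1 : B * (Real.sqrt c • A⁻¹) = Real.sqrt c • A := by
      rw [Matrix.mul_smul, ← hAA, Matrix.mul_assoc, Matrix.mul_nonsing_inv A hAu,
        Matrix.mul_one]
    have e2 : (Real.sqrt c • A⁻¹)⁻¹ = (Real.sqrt c)⁻¹ • A := by
      refine Matrix.inv_eq_right_inv ?_
      rw [Matrix.smul_mul, Matrix.mul_smul, smul_smul,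
        Matrix.nonsing_inv_mul A hAu, mul_inv_cancel₀ hsc.ne', one_smul]
    have hcs : c * (Real.sqrt c)⁻¹ = Real.sqrt c := by
      field_simp
      rw [sq, hscsq]
    rw [e1, e2]
    simp only [Matrix.trace_smul, smul_eq_mul]
    rw [← mul_assoc, hcs]
    ring
end
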